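/- Let n ≥ 2 and let π⁺, π⁻ be subsets of the simple roots π of sl_n with π⁺ ∪ π⁻ = π. If μ ∈ M, γ ∈ K and μ + γ ∈ Δ, then μ + γ ∈ K; if μ ∈ M, γ ∈ −K and μ + γ ∈ Δ, then μ + γ ∈ −K. (Lemma 1.8 (vii),(viii).) -/

import Mathlib

open Pointwise

noncomputable def eps (n : ℕ) (i : Fin n) : Fin n → ℝ := Pi.single i 1

/-- The roots of `sl_n`: `ε_i - ε_j` for `i ≠ j`. -/
def Delta (n : ℕ) : Set (Fin n → ℝ) :=
  {v | ∃ i j : Fin n, i ≠ j ∧ v = eps n i - eps n j}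

/-- The positive roots: `ε_i - ε_j` for `i < j`. -/
def DeltaPos (n : ℕ) : Set (Fin n → ℝ) :=
  {v | ∃ i j : Fin n, i < j ∧ v = eps n i - eps n j}

/-- The negative roots. -/
def DeltaNeg (n : ℕ) : Set (Fin n → ℝ) := -DeltaPos n

/-- The simple roots `α_i = ε_i - ε_{i+1}`. -/
def simpleRoots (n : ℕ) : Set (Fin n → ℝ) :=
  {v | ∃ i j : Fin n, (j : ℕ) = (i : ℕ) + 1 ∧ v = eps n i - eps n j}

/-- The set of ℕ-linear combinations of elements of `S`. -/
def Nspan {n : ℕ} (S : Set (Fin n → ℝ)) : Set (Fin n → ℝ) :=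
  (AddSubmonoid.closure S : AddSubmonoid (Fin n → ℝ))

/-- `R = (ℕπ⁺ ∪ (−ℕπ⁻)) ∩ Δ`. -/
def Rset (n : ℕ) (Pp Pm : Set (Fin n → ℝ)) : Set (Fin n → ℝ) :=
  (Nspan Pp ∪ -Nspan Pm) ∩ Delta n

/-- `K = Δ \ R`. -/
def Kset (n : ℕ) (Pp Pm : Set (Fin n → ℝ)) : Set (Fin n → ℝ) :=
  Delta n \ Rset n Pp Pm

/-- `M = R ∩ (−R)`. -/
def Mset (n : ℕ) (Pp Pm : Set (Fin n → ℝ)) : Set (Fin n → ℝ) :=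
  Rset n Pp Pm ∩ -Rset n Pp Pm

/-- `R_* = (−R) \ M`. -/
def RstarSet (n : ℕ) (Pp Pm : Set (Fin n → ℝ)) : Set (Fin n → ℝ) :=
  -Rset n Pp Pm \ Mset n Pp Pm

lemma eps_apply {n : ℕ} (i t : Fin n) : eps n i t = if t = i then 1 else 0 := by
  simp [eps, Pi.single_apply]

namespace Aux
variable {n : ℕ}

def F (m : Fin n) : (Fin n → ℝ) →+ ℝ where
  toFun v := ∑ t ∈ Finset.univ.filter (· ≤ m), v t
  map_zero' := by simp
  map_add' x y := by simp [Finset.sum_add_distrib]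

lemma F_eps (m a : Fin n) : F m (eps n a) = if a ≤ m then 1 else 0 := by
  show (∑ t ∈ Finset.univ.filter (· ≤ m), eps n a t) = _
  simp only [eps_apply]
  rw [Finset.sum_ite_eq']
  simp

def Chain (S : Set (Fin n → ℝ)) (i j : Fin n) : Prop :=
  i < j ∧ ∀ k l : Fin n, i ≤ k → l ≤ j → (l : ℕ) = (k : ℕ) + 1 → eps n k - eps n l ∈ S

lemma chain_of_mem_nspan {S : Set (Fin n → ℝ)} (hS : S ⊆ simpleRoots n)
    {i j : Fin n} (hij : i ≠ j) (hx : eps n i - eps n j ∈ Nspan S) :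
    Chain S i j := by
  have key : ∀ m : Fin n, 0 ≤ F m (eps n i - eps n j) ∧
      (F m (eps n i - eps n j) ≠ 0 →
        ∀ l : Fin n, (l : ℕ) = (m : ℕ) + 1 → eps n m - eps n l ∈ S) := by
    have hx' : eps n i - eps n j ∈ AddSubmonoid.closure S := hx
    refine AddSubmonoid.closure_induction
      (motive := fun v _ => ∀ m : Fin n, 0 ≤ F m v ∧
        (F m v ≠ 0 → ∀ l : Fin n, (l : ℕ) = (m : ℕ) + 1 → eps n m - eps n l ∈ S))
      ?_ ?_ ?_ hx'
    · intro x hxS m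
      obtain ⟨a, b, hab, rfl⟩ := hS hxS
      have hFs : F m (eps n a - eps n b) =
          (if a ≤ m then 1 else 0) - (if b ≤ m then 1 else 0) := by
        rw [map_sub, F_eps, F_eps]
      constructor
      · rw [hFs]; split_ifs with h1 h2 h2 <;> norm_num
        exact absurd (le_trans (by omega : a ≤ b) h2) h1
      · intro hne l hl
        rw [hFs] at hne
        have hab' : a ≤ b := by omega
        by_cases h2 : b ≤ m
        · exfalso; rw [if_pos (le_trans hab' h2), if_pos h2] at hne; norm_num at hne
        by_cases h1 : a ≤ m
        swap
        · exfalso; rw [if_neg h1, if_neg h2] at hne; norm_num at hne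
        -- case a ≤ m, ¬ b ≤ m : then m = a
        have hma : m = a := by
          have h1' : (a : ℕ) ≤ (m : ℕ) := h1
          have h2' : ¬ (b : ℕ) ≤ (m : ℕ) := h2
          exact Fin.ext (by omega)
        have hlb : l = b := Fin.ext (by omega)
        rw [hma, hlb]; exact hxS
    · intro m; simp
    · intro x y hxc hyc hx hy m
      obtain ⟨hx1, hx2⟩ := hx m
      obtain ⟨hy1, hy2⟩ := hy m
      rw [map_add]
      refine ⟨by linarith, ?_⟩
      intro hne l hl
      rcases eq_or_ne (F m x) 0 with h | h
      · exact hy2 (by intro h'; exact hne (by rw [h, h']; ring)) l hl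
      · exact hx2 h l hl
  have hF : ∀ m : Fin n, F m (eps n i - eps n j) =
      (if i ≤ m then 1 else 0) - (if j ≤ m then 1 else 0) := by
    intro m; rw [map_sub, F_eps, F_eps]
  have hij' : i < j := by
    rcases lt_or_gt_of_ne hij with h | h
    · exact h
    · exfalso
      have h0 := (key j).1
      rw [hF j] at h0
      rw [if_neg (not_le_of_gt h), if_pos le_rfl] at h0
      norm_num at h0
  refine ⟨hij', ?_⟩
  intro k l hik hlj hl
  have hkj : k < j := by
    have : (k : ℕ) < (l : ℕ) := by omega
    exact lt_of_lt_of_le this hlj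
  have hne : F k (eps n i - eps n j) ≠ 0 := by
    rw [hF k, if_pos hik, if_neg (not_le_of_gt hkj)]; norm_num
  exact (key k).2 hne l hl

lemma mem_nspan_of_chain {S : Set (Fin n → ℝ)} {i j : Fin n}
    (h : Chain S i j) : eps n i - eps n j ∈ Nspan S := by
  obtain ⟨hij, hch⟩ := h
  have main : ∀ d : ℕ, ∀ i : Fin n, (j : ℕ) - (i : ℕ) ≤ d → i < j →
      (∀ k l : Fin n, i ≤ k → l ≤ j → (l : ℕ) = (k : ℕ) + 1 → eps n k - eps n l ∈ S) →
      eps n i - eps n j ∈ AddSubmonoid.closure S := by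
    intro d
    induction d with
    | zero => intro i hd hij _; exfalso; have : (i : ℕ) < (j : ℕ) := hij; omega
    | succ d ih =>
      intro i hd hij hch
      by_cases hbase : (j : ℕ) = (i : ℕ) + 1
      · exact AddSubmonoid.subset_closure (hch i j le_rfl le_rfl hbase)
      · have hij' : (i : ℕ) < (j : ℕ) := hij
        have hlt : (i : ℕ) + 1 < n := by have := j.isLt; omega
        set l : Fin n := ⟨(i : ℕ) + 1, hlt⟩ with hldef
        have hil : (l : ℕ) = (i : ℕ) + 1 := rfl
        have hlj : l < j := by show (l : ℕ) < (j : ℕ); omega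
        have h1 : eps n i - eps n l ∈ S := hch i l le_rfl (le_of_lt hlj) hil
        have h2 : eps n l - eps n j ∈ AddSubmonoid.closure S := by
          refine ih l (by omega) hlj ?_
          intro k l' hlk hl'j hl'
          exact hch k l' (le_trans (le_of_lt (by show (i:ℕ) < (l:ℕ); omega)) hlk) hl'j hl'
        have : eps n i - eps n j = (eps n i - eps n l) + (eps n l - eps n j) := by abel
        rw [this]
        exact AddSubmonoid.add_mem _ (AddSubmonoid.subset_closure h1) h2
  exact main ((j : ℕ) - (i : ℕ)) i le_rfl hij hch

lemma mem_R_iff {Pp Pm : Set (Fin n → ℝ)} (hPp : Pp ⊆ simpleRoots n)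
    (hPm : Pm ⊆ simpleRoots n) {i j : Fin n} (hij : i ≠ j) :
    eps n i - eps n j ∈ Rset n Pp Pm ↔ Chain Pp i j ∨ Chain Pm j i := by
  constructor
  · rintro ⟨h1, -⟩
    rcases h1 with h | h
    · exact Or.inl (chain_of_mem_nspan hPp hij h)
    · refine Or.inr (chain_of_mem_nspan hPm hij.symm ?_)
      have : -(eps n i - eps n j) ∈ Nspan Pm := Set.mem_neg.mp h
      rwa [neg_sub] at this
  · intro h
    refine ⟨?_, ⟨i, j, hij, rfl⟩⟩
    rcases h with h | h
    · exact Or.inl (mem_nspan_of_chain h)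
    · refine Or.inr (Set.mem_neg.mpr ?_)
      rw [neg_sub]
      exact mem_nspan_of_chain h

lemma chain_trans {Pp Pm : Set (Fin n → ℝ)} {i j k : Fin n}
    (h1 : Chain Pp i j ∨ Chain Pm j i) (h2 : Chain Pp j k ∨ Chain Pm k j)
    (hik : i ≠ k) : Chain Pp i k ∨ Chain Pm k i := by
  rcases h1 with ⟨hij, c1⟩ | ⟨hji, c1⟩ <;> rcases h2 with ⟨hjk, c2⟩ | ⟨hkj, c2⟩
  · -- i < j, j < k : Pp on [i,k)
    refine Or.inl ⟨lt_trans hij hjk, ?_⟩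
    intro a b hia hbk hb
    rcases le_or_gt b j with h | h
    · exact c1 a b hia h hb
    · exact c2 a b (by omega) hbk hb
  · -- i < j (Pp on [i,j)), k < j (Pm on [k,j))
    rcases lt_or_gt_of_ne hik with h | h
    · refine Or.inl ⟨h, ?_⟩
      intro a b hia hbk hb
      exact c1 a b hia (le_of_lt (lt_of_le_of_lt hbk hkj)) hb
    · refine Or.inr ⟨h, ?_⟩
      intro a b hka hbi hb
      exact c2 a b hka (le_of_lt (lt_of_le_of_lt hbi hij)) hb
  · -- j < i (Pm on [j,i)), j < k (Pp on [j,k))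
    rcases lt_or_gt_of_ne hik with h | h
    · refine Or.inl ⟨h, ?_⟩
      intro a b hia hbk hb
      exact c2 a b (le_of_lt (lt_of_lt_of_le hji hia)) hbk hb
    · refine Or.inr ⟨h, ?_⟩
      intro a b hka hbi hb
      exact c1 a b (le_of_lt (lt_of_lt_of_le hjk hka)) hbi hb
  · -- k < j, j < i : Pm on [k,i)
    refine Or.inr ⟨lt_trans hkj hji, ?_⟩
    intro a b hka hbi hb
    rcases le_or_gt b j with h | h
    · exact c2 a b hka h hb
    · exact c1 a b (by omega) hbi hb

lemma sum_cases {i j k l : Fin n} (hij : i ≠ j) (hkl : k ≠ l)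
    (hsum : eps n i - eps n j + (eps n k - eps n l) ∈ Delta n) :
    (j = k ∧ i ≠ l) ∨ (i = l ∧ j ≠ k) := by
  obtain ⟨p, q, hpq, heq⟩ := hsum
  by_cases hjk : j = k <;> by_cases hil : i = l
  · exfalso
    subst hjk; subst hil
    have h0 : (0 : Fin n → ℝ) = eps n p - eps n q := by rw [← heq]; abel
    have h1 := congrFun h0 p
    simp only [Pi.zero_apply, Pi.sub_apply, eps_apply] at h1
    rw [if_pos trivial, if_neg hpq] at h1
    norm_num at h1
  · exact Or.inl ⟨hjk, hil⟩
  · exact Or.inr ⟨hil, hjk⟩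
  · exfalso
    -- evaluate at j
    have h2 := congrFun heq j
    simp only [Pi.add_apply, Pi.sub_apply, eps_apply, if_pos rfl] at h2
    rw [if_neg (fun h : j = i => hij h.symm), if_neg (fun h : j = k => hjk h)] at h2
    -- h2 : 0 - 1 + (0 - L) = P - Q
    have hjl : ¬ (j = l) := by
      intro h; rw [if_pos h] at h2; split_ifs at h2 <;> norm_num at h2
    rw [if_neg hjl] at h2
    have hq : j = q := by
      by_contra hq; rw [if_neg hq] at h2; split_ifs at h2 <;> norm_num at h2
    rw [if_pos hq] at h2
    have hp : ¬ (j = p) := by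
      intro h; rw [if_pos h] at h2; norm_num at h2
    -- evaluate at i
    have h1 := congrFun heq i
    simp only [Pi.add_apply, Pi.sub_apply, eps_apply, if_pos rfl] at h1
    rw [if_neg (fun h : i = j => hij h), if_neg (fun h : i = l => hil h),
        if_neg (fun h : i = q => hij (h.trans hq.symm))] at h1
    have hik : ¬ (i = k) := by
      intro h; rw [if_pos h] at h1; split_ifs at h1 <;> norm_num at h1
    rw [if_neg hik] at h1
    have hpi : i = p := by
      by_contra hpi; rw [if_neg hpi] at h1; norm_num at h1
    -- evaluate at k
    have h3 := congrFun heq k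
    simp only [Pi.add_apply, Pi.sub_apply, eps_apply, if_pos rfl] at h3
    rw [if_neg (fun h : k = j => hjk h.symm), if_neg (fun h : k = l => hkl h),
        if_neg (fun h : k = q => hjk (hq.trans h.symm)),
        if_neg (fun h : k = p => hik (hpi.trans h.symm))] at h3
    split_ifs at h3 <;> norm_num at h3

lemma Rset_closed {Pp Pm : Set (Fin n → ℝ)} (hPp : Pp ⊆ simpleRoots n)
    (hPm : Pm ⊆ simpleRoots n) {x y : Fin n → ℝ}
    (hx : x ∈ Rset n Pp Pm) (hy : y ∈ Rset n Pp Pm) (hxy : x + y ∈ Delta n) :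
    x + y ∈ Rset n Pp Pm := by
  obtain ⟨i, j, hij, rfl⟩ := hx.2
  obtain ⟨k, l, hkl, rfl⟩ := hy.2
  rcases sum_cases hij hkl hxy with ⟨hjk, hil⟩ | ⟨hil, hjk⟩
  · subst hjk
    have hsum : eps n i - eps n j + (eps n j - eps n l) = eps n i - eps n l := by abel
    rw [hsum]
    exact (mem_R_iff hPp hPm hil).mpr
      (chain_trans ((mem_R_iff hPp hPm hij).mp hx) ((mem_R_iff hPp hPm hkl).mp hy) hil)
  · subst hil
    have hsum : eps n i - eps n j + (eps n k - eps n i) = eps n k - eps n j := by abel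
    rw [hsum]
    have hkj : k ≠ j := fun h => by
      apply hjk  -- j = k
      exact h.symm
    exact (mem_R_iff hPp hPm hkj).mpr
      (chain_trans ((mem_R_iff hPp hPm hkl).mp hy) ((mem_R_iff hPp hPm hij).mp hx) hkj)

end Aux

lemma Delta_neg {n : ℕ} {x : Fin n → ℝ} (h : x ∈ Delta n) : -x ∈ Delta n := by
  obtain ⟨i, j, hij, rfl⟩ := h
  exact ⟨j, i, hij.symm, by abel⟩

/-- Lemma 1.8 (vii),(viii): `(M + K) ∩ Δ ⊆ K` and `(M + (−K)) ∩ Δ ⊆ −K`. -/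
theorem statement_3 (n : ℕ) (hn : 2 ≤ n) (Pp Pm : Set (Fin n → ℝ))
    (hPp : Pp ⊆ simpleRoots n) (hPm : Pm ⊆ simpleRoots n)
    (hU : Pp ∪ Pm = simpleRoots n) :
    (∀ μ ∈ Mset n Pp Pm, ∀ γ ∈ Kset n Pp Pm,
      μ + γ ∈ Delta n → μ + γ ∈ Kset n Pp Pm) ∧
    (∀ μ ∈ Mset n Pp Pm, ∀ γ ∈ -Kset n Pp Pm,
      μ + γ ∈ Delta n → μ + γ ∈ -Kset n Pp Pm) := by
  have part1 : ∀ μ ∈ Mset n Pp Pm, ∀ γ ∈ Kset n Pp Pm,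
      μ + γ ∈ Delta n → μ + γ ∈ Kset n Pp Pm := by
    intro μ hμ γ hγ hsum
    refine ⟨hsum, ?_⟩
    intro hR
    have hnegμ : -μ ∈ Rset n Pp Pm := Set.mem_neg.mp hμ.2
    have hγΔ : γ ∈ Delta n := hγ.1
    have : -μ + (μ + γ) ∈ Rset n Pp Pm := by
      refine Aux.Rset_closed hPp hPm hnegμ hR ?_
      rwa [neg_add_cancel_left]
    rw [neg_add_cancel_left] at this
    exact hγ.2 this
  refine ⟨part1, ?_⟩
  intro μ hμ γ hγ hsum
  have hμ' : -μ ∈ Mset n Pp Pm := ⟨Set.mem_neg.mp hμ.2, Set.mem_neg.mpr (by rw [neg_neg]; exact hμ.1)⟩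
  have hγ' : -γ ∈ Kset n Pp Pm := Set.mem_neg.mp hγ
  have hsum' : -μ + -γ ∈ Delta n := by
    have := Delta_neg hsum
    rwa [neg_add] at this
  have := part1 (-μ) hμ' (-γ) hγ' hsum'
  rw [← neg_add] at this
  exact Set.mem_neg.mpr this
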